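/- Let N ≥ 1 be a natural number and let r ≥ 2 be a real number. Then there exists a constant C > 0 (depending only on r and N) such that for all vectors x, y ∈ ℝ^N one has ‖y‖^r − ‖x‖^r − r‖x‖^(r−2)⟨x, y − x⟩ ≥ C‖x − y‖^r, where ⟨·,·⟩ denotes the Euclidean inner product and ‖·‖ the Euclidean norm. -/

import Mathlib

open Real
open scoped NNReal

/-- `a^p + b^p ≤ (a+b)^p` for nonnegative reals and `p ≥ 1`. -/
private lemma aux_add_rpow {a b p : ℝ} (ha : 0 ≤ a) (hb : 0 ≤ b) (hp : 1 ≤ p) :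
    a ^ p + b ^ p ≤ (a + b) ^ p := by
  have h := NNReal.add_rpow_le_rpow_add a.toNNReal b.toNNReal hp
  have h' := NNReal.coe_le_coe.2 h
  simp only [NNReal.coe_add, NNReal.coe_rpow, Real.coe_toNNReal a ha,
    Real.coe_toNNReal b hb] at h'
  exact h'

/-- power mean: `((u+v)/2)^p ≤ (u^p + v^p)/2` for nonnegative reals and `p ≥ 1`. -/
private lemma aux_mean_rpow {u v p : ℝ} (hu : 0 ≤ u) (hv : 0 ≤ v) (hp : 1 ≤ p) :
    ((u + v) / 2) ^ p ≤ (u ^ p + v ^ p) / 2 := by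
  have h := NNReal.rpow_arith_mean_le_arith_mean2_rpow (1/2) (1/2)
      u.toNNReal v.toNNReal (add_halves 1) hp
  have h' := NNReal.coe_le_coe.2 h
  simp only [NNReal.coe_add, NNReal.coe_mul, NNReal.coe_rpow, NNReal.coe_div,
    NNReal.coe_one, NNReal.coe_ofNat, Real.coe_toNNReal u hu, Real.coe_toNNReal v hv] at h'
  calc ((u + v) / 2) ^ p = (1/2 * u + 1/2 * v) ^ p := by ring_nf
    _ ≤ 1/2 * u ^ p + 1/2 * v ^ p := h'
    _ = (u ^ p + v ^ p) / 2 := by ring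

/-- scalar gradient inequality: `a^r + r a^{r-1}(b-a) ≤ b^r` for `0 < a`, `0 ≤ b`, `r ≥ 1`. -/
private lemma aux_bernoulli {a b r : ℝ} (ha : 0 < a) (hb : 0 ≤ b) (hr : 1 ≤ r) :
    a ^ r + r * a ^ (r - 1) * (b - a) ≤ b ^ r := by
  have hs : (-1 : ℝ) ≤ b / a - 1 := by
    have : 0 ≤ b / a := div_nonneg hb ha.le
    linarith
  have hber := one_add_mul_self_le_rpow_one_add hs hr
  rw [add_sub_cancel] at hber
  have key : a ^ r * (1 + r * (b / a - 1)) ≤ a ^ r * (b / a) ^ r :=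
    mul_le_mul_of_nonneg_left hber (Real.rpow_nonneg ha.le r)
  have hdiv : a ^ r * (b / a) ^ r = b ^ r := by
    rw [Real.div_rpow hb ha.le]
    field_simp
  rw [hdiv] at key
  have har : a ^ r = a ^ (r - 1) * a := by
    rw [← Real.rpow_add_one ha.ne' (r - 1)]
    congr 1; ring
  calc a ^ r + r * a ^ (r - 1) * (b - a)
      = a ^ r * (1 + r * (b / a - 1)) := by
        rw [har]; field_simp
    _ ≤ b ^ r := key

/-- gradient inequality for `z ↦ ‖z‖^r`. -/
private lemma aux_grad {N : ℕ} {r : ℝ} (hr : 2 ≤ r) (x z : EuclideanSpace ℝ (Fin N)) :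
    ‖x‖ ^ r + r * ‖x‖ ^ (r - 2) * (inner ℝ x (z - x) : ℝ) ≤ ‖z‖ ^ r := by
  rcases eq_or_ne x 0 with hx | hx
  · simp only [hx, inner_zero_left, mul_zero, norm_zero, add_zero]
    rw [Real.zero_rpow (by linarith : r ≠ 0)]
    exact Real.rpow_nonneg (norm_nonneg z) r
  · have ha : 0 < ‖x‖ := norm_pos_iff.2 hx
    have hinner : (inner ℝ x (z - x) : ℝ) = inner ℝ x z - ‖x‖ ^ 2 := by
      rw [inner_sub_right, real_inner_self_eq_norm_sq]
    have hcs : (inner ℝ x z : ℝ) ≤ ‖x‖ * ‖z‖ := real_inner_le_norm x z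
    have hcoef : 0 ≤ r * ‖x‖ ^ (r - 2) := by positivity
    have step1 : r * ‖x‖ ^ (r - 2) * (inner ℝ x (z - x) : ℝ)
        ≤ r * ‖x‖ ^ (r - 2) * (‖x‖ * ‖z‖ - ‖x‖ ^ 2) := by
      apply mul_le_mul_of_nonneg_left _ hcoef
      rw [hinner]; linarith
    have h1 : ‖x‖ ^ (r - 2) * ‖x‖ = ‖x‖ ^ (r - 1) := by
      rw [← Real.rpow_add_one ha.ne' (r - 2)]
      congr 1; ring
    have step2 : r * ‖x‖ ^ (r - 2) * (‖x‖ * ‖z‖ - ‖x‖ ^ 2)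
        = r * ‖x‖ ^ (r - 1) * (‖z‖ - ‖x‖) := by
      linear_combination (r * (‖z‖ - ‖x‖)) * h1
    have hber := aux_bernoulli ha (norm_nonneg z) (by linarith : (1:ℝ) ≤ r)
    linarith [step1, step2, hber]

theorem lindqvist_inequality_ge_two (N : ℕ) (hN : 1 ≤ N) (r : ℝ) (hr : 2 ≤ r) :
    ∃ C : ℝ, 0 < C ∧ ∀ x y : EuclideanSpace ℝ (Fin N),
      ‖y‖ ^ r - ‖x‖ ^ r - r * ‖x‖ ^ (r - 2) * (inner ℝ x (y - x) : ℝ) ≥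
        C * ‖x - y‖ ^ r := by
  refine ⟨2 / 2 ^ r, by positivity, fun x y => ?_⟩
  have hr2 : (1 : ℝ) ≤ r / 2 := by linarith
  have hmx : (2 : ℝ)⁻¹ • (x + y) - x = (2 : ℝ)⁻¹ • (y - x) := by module
  have hgrad : ‖x‖ ^ r + r * ‖x‖ ^ (r - 2) * ((2:ℝ)⁻¹ * (inner ℝ x (y - x) : ℝ))
      ≤ ‖(2 : ℝ)⁻¹ • (x + y)‖ ^ r := by
    have h := aux_grad hr x ((2 : ℝ)⁻¹ • (x + y))
    rwa [hmx, inner_smul_right] at h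
  -- norms of midpoint and half-difference
  have hmn : ‖(2 : ℝ)⁻¹ • (x + y)‖ = ‖x + y‖ / 2 := by
    rw [norm_smul]; simp; ring
  have hvn : ‖(2 : ℝ)⁻¹ • (x - y)‖ = ‖x - y‖ / 2 := by
    rw [norm_smul]; simp; ring
  set a : ℝ := ‖x + y‖ / 2 with hadef
  set b : ℝ := ‖x - y‖ / 2 with hbdef
  have ha0 : 0 ≤ a := by positivity
  have hb0 : 0 ≤ b := by positivity
  -- parallelogram law
  have hpar : a ^ (2:ℕ) + b ^ (2:ℕ) = (‖x‖ ^ (2:ℕ) + ‖y‖ ^ (2:ℕ)) / 2 := by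
    have h := parallelogram_law_with_norm ℝ x y
    rw [hadef, hbdef]; field_simp; linarith
  -- Clarkson-type inequality
  have hsq : ∀ c : ℝ, 0 ≤ c → c ^ r = (c ^ (2:ℕ)) ^ (r / 2) := by
    intro c hc
    rw [← Real.rpow_natCast c 2, ← Real.rpow_mul hc]
    congr 1; push_cast; ring
  have hclark : a ^ r + b ^ r ≤ (‖x‖ ^ r + ‖y‖ ^ r) / 2 := by
    have h1 : a ^ r + b ^ r ≤ (a ^ (2:ℕ) + b ^ (2:ℕ)) ^ (r / 2) := by
      rw [hsq a ha0, hsq b hb0]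
      exact aux_add_rpow (by positivity) (by positivity) hr2
    have h2 : ((‖x‖ ^ (2:ℕ) + ‖y‖ ^ (2:ℕ)) / 2) ^ (r / 2)
        ≤ ((‖x‖ ^ (2:ℕ)) ^ (r/2) + (‖y‖ ^ (2:ℕ)) ^ (r/2)) / 2 :=
      aux_mean_rpow (by positivity) (by positivity) hr2
    rw [hpar] at h1
    rw [← hsq ‖x‖ (norm_nonneg x), ← hsq ‖y‖ (norm_nonneg y)] at h2
    linarith
  -- combine
  have hmid : ‖(2 : ℝ)⁻¹ • (x + y)‖ ^ r = a ^ r := by rw [hmn]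
  rw [hmid] at hgrad
  have hbr : b ^ r = ‖x - y‖ ^ r / 2 ^ r := by
    rw [hbdef, Real.div_rpow (norm_nonneg _) (by norm_num)]
  have final : ‖x‖ ^ r + r * ‖x‖ ^ (r - 2) * ((2:ℝ)⁻¹ * (inner ℝ x (y - x) : ℝ))
      ≤ (‖x‖ ^ r + ‖y‖ ^ r) / 2 - ‖x - y‖ ^ r / 2 ^ r := by
    have hbrpos : 0 ≤ b ^ r := Real.rpow_nonneg hb0 r
    rw [← hbr]
    linarith
  rw [ge_iff_le, show (2 / 2 ^ r) * ‖x - y‖ ^ r = 2 * (‖x - y‖ ^ r / 2 ^ r) by ring]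
  linarith [final]
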